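/- arXiv:2409.09973 — 2 statements merged into one kernel-verified Lean document; each statement's English description precedes it below -/
import Mathlib

section
/- Let Q be a probability law for a pair of random variables (X, Y) where Y takes values in {0,1}, and let V be a {0,1}-valued random variable with joint law determined by Q. Suppose E_Q[V | Y=1, X] − E_Q[V | Y=0, X] ≠ 0 almost surely. Define m_Q(x,v) = (v − E_Q[V | Y=0, X=x]) / (E_Q[V | Y=1, X=x] − E_Q[V | Y=0, X=x]). Then E_Q[m_Q(X, V) | X, Y] = Y almost surely. -/
open MeasureTheory

/-- With `V, Y` binary, `e y (x)` versions of `E_Q[V | X = x, Y = y]`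
(encoded by `E_Q[V | X, Y] = e1(X)·Y + e0(X)·(1−Y)` a.s.) and
`E_Q[V|Y=1,X] − E_Q[V|Y=0,X] ≠ 0` a.s., the function
`m_Q(x,v) = (v − e0(x))/(e1(x) − e0(x))` satisfies `E_Q[m_Q(X,V) | X, Y] = Y` a.s. -/
theorem stmt_4 {Ω α : Type*} {F : MeasurableSpace Ω} [MeasurableSpace α]
    (Q : Measure Ω) [IsProbabilityMeasure Q]
    (X : Ω → α) (V Y : Ω → ℝ) (hX : Measurable X) (hV : Measurable V) (hY : Measurable Y)
    (hVbin : ∀ ω, V ω = 0 ∨ V ω = 1) (hYbin : ∀ ω, Y ω = 0 ∨ Y ω = 1)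
    (e0 e1 : α → ℝ) (he0 : Measurable e0) (he1 : Measurable e1)
    (hcond : Q[V|MeasurableSpace.comap (fun ω => (X ω, Y ω)) inferInstance] =ᵐ[Q]
      fun ω => e1 (X ω) * Y ω + e0 (X ω) * (1 - Y ω))
    (hne : ∀ᵐ ω ∂Q, e1 (X ω) - e0 (X ω) ≠ 0)
    (hint : Integrable (fun ω => (V ω - e0 (X ω)) / (e1 (X ω) - e0 (X ω))) Q) :
    Q[fun ω => (V ω - e0 (X ω)) / (e1 (X ω) - e0 (X ω))|
        MeasurableSpace.comap (fun ω => (X ω, Y ω)) inferInstance] =ᵐ[Q] Y := by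
  set m : MeasurableSpace Ω := MeasurableSpace.comap (fun ω => (X ω, Y ω)) inferInstance with hm_def
  have hXY : Measurable[F] fun ω => (X ω, Y ω) := hX.prodMk hY
  have hm : m ≤ F := hXY.comap_le
  -- the pair map is m-measurable
  have hpair : Measurable[m] fun ω => (X ω, Y ω) := Measurable.of_comap_le le_rfl
  -- key m-measurable functions
  set g : Ω → ℝ := fun ω => (e1 (X ω) - e0 (X ω))⁻¹ with hg_def
  set h : Ω → ℝ := fun ω => e1 (X ω) * Y ω + e0 (X ω) * (1 - Y ω) with hh_def
  have hg_meas : Measurable[m] g := by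
    have : Measurable fun p : α × ℝ => (e1 p.1 - e0 p.1)⁻¹ :=
      ((he1.comp measurable_fst).sub (he0.comp measurable_fst)).inv
    exact this.comp hpair
  have hY_meas : Measurable[m] Y := measurable_snd.comp hpair
  have hh_meas : Measurable[m] h := by
    have : Measurable fun p : α × ℝ =>
        e1 p.1 * p.2 + e0 p.1 * (1 - p.2) :=
      ((he1.comp measurable_fst).mul measurable_snd).add
        ((he0.comp measurable_fst).mul (measurable_const.sub measurable_snd))
    exact this.comp hpair
  have hY_int : Integrable Y Q := by
    refine (integrable_const (1 : ℝ)).mono' (hY.aestronglyMeasurable) ?_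
    refine Filter.Eventually.of_forall fun ω => ?_
    rcases hYbin ω with h1 | h1 <;> simp [h1]
  have hV_int : Integrable V Q := by
    refine (integrable_const (1 : ℝ)).mono' (hV.aestronglyMeasurable) ?_
    refine Filter.Eventually.of_forall fun ω => ?_
    rcases hVbin ω with h1 | h1 <;> simp [h1]
  have hh_int : Integrable h Q := (integrable_condExp (m := m)).congr hcond
  -- a.e. identity: f = g * (V - h) + Y
  have hae : (fun ω => (V ω - e0 (X ω)) / (e1 (X ω) - e0 (X ω))) =ᵐ[Q]
      fun ω => g ω * (V ω - h ω) + Y ω := by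
    filter_upwards [hne] with ω hω
    have : V ω - h ω = (V ω - e0 (X ω)) - (e1 (X ω) - e0 (X ω)) * Y ω := by
      simp only [hh_def]; ring
    rw [this]
    simp only [hg_def]
    field_simp
    ring
  have hgVh_int : Integrable (fun ω => g ω * (V ω - h ω)) Q := by
    have : Integrable (fun ω =>
        (V ω - e0 (X ω)) / (e1 (X ω) - e0 (X ω)) - Y ω) Q := hint.sub hY_int
    refine this.congr ?_
    filter_upwards [hae] with ω hω
    rw [hω]; ring
  -- pull-out
  have hpull : Q[fun ω => g ω * (V ω - h ω)|m] =ᵐ[Q] fun ω => g ω * (Q[fun ω => V ω - h ω|m]) ω :=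
    condExp_mul_of_stronglyMeasurable_left (hg_meas.stronglyMeasurable) hgVh_int (hV_int.sub hh_int)
  have hVh_zero : Q[fun ω => V ω - h ω|m] =ᵐ[Q] 0 := by
    have h1 : Q[fun ω => V ω - h ω|m] =ᵐ[Q] Q[V|m] - Q[h|m] := condExp_sub hV_int hh_int m
    have h2 : Q[h|m] = h := condExp_of_stronglyMeasurable hm hh_meas.stronglyMeasurable hh_int
    filter_upwards [h1, hcond] with ω h1ω hcω
    simp only [Pi.sub_apply, Pi.zero_apply] at *
    rw [h1ω, h2, hcω]
    simp [hh_def]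
  have hYcond : Q[Y|m] = Y := condExp_of_stronglyMeasurable hm hY_meas.stronglyMeasurable hY_int
  calc Q[fun ω => (V ω - e0 (X ω)) / (e1 (X ω) - e0 (X ω))|m]
      =ᵐ[Q] Q[fun ω => g ω * (V ω - h ω) + Y ω|m] := condExp_congr_ae hae
    _ =ᵐ[Q] Q[fun ω => g ω * (V ω - h ω)|m] + Q[Y|m] := condExp_add hgVh_int hY_int m
    _ =ᵐ[Q] Y := by
        filter_upwards [hpull, hVh_zero] with ω hpω hzω
        simp only [Pi.add_apply] at *
        rw [hpω, hzω, hYcond]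
        simp
end

section
/- Let U and B be random variables on finite sets 𝒰 and ℬ with joint probability mass function q(u,b) under law Q. Suppose there exists u₀ ∈ 𝒰 with q(u₀ | b) > 0 for all b with q(b) > 0. Then for all u ∈ 𝒰 and all b with q(b) > 0, q(u, b) = q(u | b) · [q(b | u₀)/q(u₀ | b)] / Σ_{b': q(b')>0} [q(b' | u₀)/q(u₀ | b')]. In other words, the joint law is determined by the conditional of U given B and the conditional of B given U=u₀. -/
open Finset

/-- For a joint pmf `q` on finite `U × B` with `q(u₀|b) > 0` whenever `q(b) > 0`,
the joint is recovered from the conditional of `U` given `B` and of `B` given `U = u₀`: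
`q(u,b) = q(u|b) · [q(b|u₀)/q(u₀|b)] / Σ_{b' : q(b')>0} [q(b'|u₀)/q(u₀|b')]`. -/
theorem stmt_6 {U B : Type*} [Fintype U] [Fintype B]
    (q : U → B → ℝ) (hnn : ∀ u b, 0 ≤ q u b) (hsum : ∑ u, ∑ b, q u b = 1)
    (u0 : U) (hpos : ∀ b, 0 < ∑ u, q u b → 0 < q u0 b / ∑ u, q u b) :
    ∀ u b, 0 < ∑ u', q u' b →
      q u b = (q u b / ∑ u', q u' b) *
        ((q u0 b / ∑ b', q u0 b') / (q u0 b / ∑ u', q u' b)) /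
        ∑ b' ∈ Finset.univ.filter (fun b' => 0 < ∑ u', q u' b'),
          (q u0 b' / ∑ b'', q u0 b'') / (q u0 b' / ∑ u', q u' b') := by
  intro u b hb
  have hq0 : ∀ b', 0 < ∑ u', q u' b' → 0 < q u0 b' := by
    intro b' h
    rcases (hnn u0 b').lt_or_eq with h' | h'
    · exact h'
    · exfalso
      have := hpos b' h
      rw [← h'] at this
      simp at this
  have hSpos : 0 < ∑ b', q u0 b' := by
    have h1 : q u0 b ≤ ∑ b', q u0 b' :=
      Finset.single_le_sum (fun b' _ => hnn u0 b') (Finset.mem_univ b)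
    exact lt_of_lt_of_le (hq0 b hb) h1
  set S : ℝ := ∑ b', q u0 b' with hS
  -- rewrite each summand as (∑ u', q u' b') / S
  have hterm : ∑ b' ∈ Finset.univ.filter (fun b' => 0 < ∑ u', q u' b'),
      (q u0 b' / S) / (q u0 b' / ∑ u', q u' b')
      = ∑ b' ∈ Finset.univ.filter (fun b' => 0 < ∑ u', q u' b'),
        (∑ u', q u' b') / S := by
    apply Finset.sum_congr rfl
    intro b' hb'
    have hTb' : 0 < ∑ u', q u' b' := by simpa using hb'
    have hq : 0 < q u0 b' := hq0 b' hTb'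
    field_simp
  have hfull : ∑ b' ∈ Finset.univ.filter (fun b' => 0 < ∑ u', q u' b'),
      (∑ u', q u' b') / S = 1 / S := by
    have h1 : ∑ b' ∈ Finset.univ.filter (fun b' => 0 < ∑ u', q u' b'),
        (∑ u', q u' b') = ∑ b', (∑ u', q u' b') := by
      apply Finset.sum_subset (Finset.filter_subset _ _)
      intro x _ hx
      simp only [Finset.mem_filter, Finset.mem_univ, true_and, not_lt] at hx
      have hge : 0 ≤ ∑ u', q u' x := Finset.sum_nonneg fun u' _ => hnn u' x
      linarith
    have h2 : ∑ b', (∑ u', q u' b') = 1 := by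
      rw [Finset.sum_comm]; exact hsum
    rw [← Finset.sum_div, h1, h2]
  rw [hterm, hfull]
  have hq : 0 < q u0 b := hq0 b hb
  field_simp
end
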